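/- Optimality of the Hohmann transfer (attainment): let l0z, l2z be nonzero real numbers with l0z + l2z ≠ 0, let σ be the sign of l0z + l2z, and set L = σ·√((l0z² + l2z²)/2), l₁ = (0, 0, L), s₁ = (0, ((l0z² − l2z²)/(l0z² + l2z²))·L, 0), u = (−1, 0, 0), e₁ = (1,0,0). Then l₁ ≠ 0, l₁ · s₁ = 0, |s₁| < |l₁|, l₁ · e₁ = 0, l₁ · u = 0, l2z·u₃ = 0, |u| = 1, l0z² = |l₁|² + (s₁ × l₁) · e₁, l2z² = |l₁|² + (s₁ × l₁) · u, and the total impulse magnitude equals |s₁ + l₁ × e₁ − (0, l0z, 0)| + |(0,0,l2z) × u − s₁ − l₁ × u| = |σ·√2·l0z²/√(l0z² + l2z²) − l0z| + |σ·√2·l2z²/√(l0z² + l2z²) − l2z|. -/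

import Mathlib

open scoped InnerProductSpace

/-- Cross product in ℝ³ (modelled as `EuclideanSpace ℝ (Fin 3)`). -/
noncomputable def cross3 (a b : EuclideanSpace ℝ (Fin 3)) : EuclideanSpace ℝ (Fin 3) :=
  (WithLp.equiv 2 (Fin 3 → ℝ)).symm
    ![a 1 * b 2 - a 2 * b 1, a 2 * b 0 - a 0 * b 2, a 0 * b 1 - a 1 * b 0]

/-- The vector (x, y, z) ∈ ℝ³. -/
noncomputable def v3 (x y z : ℝ) : EuclideanSpace ℝ (Fin 3) :=
  (WithLp.equiv 2 (Fin 3 → ℝ)).symm ![x, y, z]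


@[simp] lemma v3_0 (x y z : ℝ) : v3 x y z 0 = x := rfl
@[simp] lemma v3_1 (x y z : ℝ) : v3 x y z 1 = y := rfl
@[simp] lemma v3_2 (x y z : ℝ) : v3 x y z 2 = z := rfl

lemma cross3_v3 (a b c d e f : ℝ) :
    cross3 (v3 a b c) (v3 d e f) = v3 (b*f - c*e) (c*d - a*f) (a*e - b*d) := rfl

lemma inner_v3 (a b c d e f : ℝ) : ⟪v3 a b c, v3 d e f⟫_ℝ = a*d + b*e + c*f := by
  simp [v3, PiLp.inner_apply, Fin.sum_univ_three]; ring

lemma norm_v3 (x y z : ℝ) : ‖v3 x y z‖ = Real.sqrt (x^2 + y^2 + z^2) := by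
  simp [EuclideanSpace.norm_eq, Fin.sum_univ_three, sq_abs]

lemma add_v3 (a b c d e f : ℝ) : v3 a b c + v3 d e f = v3 (a+d) (b+e) (c+f) := by
  ext i; fin_cases i <;> rfl
lemma sub_v3 (a b c d e f : ℝ) : v3 a b c - v3 d e f = v3 (a-d) (b-e) (c-f) := by
  ext i; fin_cases i <;> rfl

lemma norm_v3_y (t : ℝ) : ‖v3 0 t 0‖ = |t| := by
  rw [norm_v3]; simp [Real.sqrt_sq_eq_abs]

lemma v3_congr {a b c d e f : ℝ} (h1 : a = d) (h2 : b = e) (h3 : c = f) :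
    v3 a b c = v3 d e f := by rw [h1, h2, h3]


set_option maxHeartbeats 1000000 in
/-- Optimality of the Hohmann transfer (attainment): the classical Hohmann data satisfy
all the feasibility constraints and realize the critical cost whose sign agrees with the
sign of l0z + l2z. -/
theorem hohmann_attained
    (l0z l2z : ℝ) (h0 : l0z ≠ 0) (h2 : l2z ≠ 0) (hsum : l0z + l2z ≠ 0)
    (σ L : ℝ) (hσ : σ = if 0 < l0z + l2z then 1 else -1)
    (hL : L = σ * Real.sqrt ((l0z ^ 2 + l2z ^ 2) / 2))
    (l₁ s₁ u e₁ : EuclideanSpace ℝ (Fin 3))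
    (hl₁ : l₁ = v3 0 0 L)
    (hs₁ : s₁ = v3 0 ((l0z ^ 2 - l2z ^ 2) / (l0z ^ 2 + l2z ^ 2) * L) 0)
    (hu : u = v3 (-1) 0 0) (he₁ : e₁ = v3 1 0 0) :
    l₁ ≠ 0 ∧
    ⟪l₁, s₁⟫_ℝ = 0 ∧
    ‖s₁‖ < ‖l₁‖ ∧
    ⟪l₁, e₁⟫_ℝ = 0 ∧
    ⟪l₁, u⟫_ℝ = 0 ∧
    l2z * u 2 = 0 ∧
    ‖u‖ = 1 ∧
    l0z ^ 2 = ‖l₁‖ ^ 2 + ⟪cross3 s₁ l₁, e₁⟫_ℝ ∧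
    l2z ^ 2 = ‖l₁‖ ^ 2 + ⟪cross3 s₁ l₁, u⟫_ℝ ∧
    ‖s₁ + cross3 l₁ e₁ - v3 0 l0z 0‖ + ‖cross3 (v3 0 0 l2z) u - s₁ - cross3 l₁ u‖ =
      |σ * Real.sqrt 2 * l0z ^ 2 / Real.sqrt (l0z ^ 2 + l2z ^ 2) - l0z| +
        |σ * Real.sqrt 2 * l2z ^ 2 / Real.sqrt (l0z ^ 2 + l2z ^ 2) - l2z| := by
  have h0sq : 0 < l0z ^ 2 := by positivity
  have h2sq : 0 < l2z ^ 2 := by positivity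
  have hQ : (0:ℝ) < l0z ^ 2 + l2z ^ 2 := by positivity
  have hσ2 : σ ^ 2 = 1 := by rw [hσ]; split_ifs <;> norm_num
  have hL2 : L ^ 2 = (l0z ^ 2 + l2z ^ 2) / 2 := by
    rw [hL, mul_pow, hσ2, one_mul, Real.sq_sqrt (by positivity)]
  have hLne : L ≠ 0 := by
    intro h; rw [h] at hL2; norm_num at hL2; nlinarith
  have hsQ : Real.sqrt (l0z ^ 2 + l2z ^ 2) ^ 2 = l0z ^ 2 + l2z ^ 2 :=
    Real.sq_sqrt hQ.le
  have hsQpos : 0 < Real.sqrt (l0z ^ 2 + l2z ^ 2) := Real.sqrt_pos.2 hQ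
  have hs2 : Real.sqrt 2 ^ 2 = 2 := Real.sq_sqrt (by norm_num)
  have hc : (l0z ^ 2 - l2z ^ 2) / (l0z ^ 2 + l2z ^ 2) * (l0z ^ 2 + l2z ^ 2)
      = l0z ^ 2 - l2z ^ 2 := by field_simp
  have sqq : Real.sqrt 2 * Real.sqrt (l0z ^ 2 + l2z ^ 2) *
      Real.sqrt ((l0z ^ 2 + l2z ^ 2) / 2) = l0z ^ 2 + l2z ^ 2 := by
    rw [← Real.sqrt_mul (by norm_num : (0:ℝ) ≤ 2),
        ← Real.sqrt_mul (by positivity),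
        show 2 * (l0z ^ 2 + l2z ^ 2) * ((l0z ^ 2 + l2z ^ 2) / 2)
          = (l0z ^ 2 + l2z ^ 2) ^ 2 by ring,
        Real.sqrt_sq hQ.le]
  have e1 : Real.sqrt 2 * Real.sqrt (l0z ^ 2 + l2z ^ 2) * L
      = σ * (l0z ^ 2 + l2z ^ 2) := by
    rw [hL]; linear_combination σ * sqq
  have e2 : Real.sqrt (l0z ^ 2 + l2z ^ 2) * L
      = σ * Real.sqrt 2 * (l0z ^ 2 + l2z ^ 2) / 2 := by
    linear_combination (Real.sqrt 2 / 2) * e1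
      - (Real.sqrt (l0z ^ 2 + l2z ^ 2) * L / 2) * hs2
  have key1 : (l0z ^ 2 - l2z ^ 2) / (l0z ^ 2 + l2z ^ 2) * L + L
      = σ * Real.sqrt 2 * l0z ^ 2 / Real.sqrt (l0z ^ 2 + l2z ^ 2) := by
    rw [eq_div_iff hsQpos.ne']
    linear_combination ((l0z ^ 2 - l2z ^ 2) / (l0z ^ 2 + l2z ^ 2) + 1) * e2
      + (σ * Real.sqrt 2 / 2) * hc
  have key2 : L - (l0z ^ 2 - l2z ^ 2) / (l0z ^ 2 + l2z ^ 2) * L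
      = σ * Real.sqrt 2 * l2z ^ 2 / Real.sqrt (l0z ^ 2 + l2z ^ 2) := by
    rw [eq_div_iff hsQpos.ne']
    linear_combination (1 - (l0z ^ 2 - l2z ^ 2) / (l0z ^ 2 + l2z ^ 2)) * e2
      - (σ * Real.sqrt 2 / 2) * hc
  have hcL : (l0z ^ 2 - l2z ^ 2) / (l0z ^ 2 + l2z ^ 2) * L * L
      = (l0z ^ 2 - l2z ^ 2) / 2 := by
    have hLL : L * L = (l0z ^ 2 + l2z ^ 2) / 2 := by nlinarith [hL2]
    rw [mul_assoc, hLL]; field_simp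
  refine ⟨?_, ?_, ?_, ?_, ?_, ?_, ?_, ?_, ?_, ?_⟩
  · rw [hl₁]; intro h; apply hLne
    have hn : ‖v3 0 0 L‖ = 0 := by rw [h, norm_zero]
    rw [norm_v3] at hn
    have := Real.sqrt_eq_zero (by positivity) |>.mp hn
    nlinarith
  · rw [hl₁, hs₁, inner_v3]; ring
  · rw [hl₁, hs₁, norm_v3, norm_v3,
      show (0:ℝ)^2 + ((l0z ^ 2 - l2z ^ 2) / (l0z ^ 2 + l2z ^ 2) * L)^2 + 0^2
        = ((l0z ^ 2 - l2z ^ 2) / (l0z ^ 2 + l2z ^ 2) * L)^2 by ring,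
      show (0:ℝ)^2 + 0^2 + L^2 = L^2 by ring,
      Real.sqrt_sq_eq_abs, Real.sqrt_sq_eq_abs, abs_mul]
    have hc1 : |(l0z ^ 2 - l2z ^ 2) / (l0z ^ 2 + l2z ^ 2)| < 1 := by
      rw [abs_div, abs_of_pos hQ, div_lt_one hQ, abs_lt]
      constructor <;> nlinarith
    calc |(l0z ^ 2 - l2z ^ 2) / (l0z ^ 2 + l2z ^ 2)| * |L| < 1 * |L| :=
          mul_lt_mul_of_pos_right hc1 (abs_pos.2 hLne)
      _ = |L| := one_mul _
  · rw [hl₁, he₁, inner_v3]; ring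
  · rw [hl₁, hu, inner_v3]; ring
  · rw [hu, v3_2]; ring
  · rw [hu, norm_v3]; norm_num
  · rw [hl₁, hs₁, he₁, cross3_v3, inner_v3, norm_v3,
      Real.sq_sqrt (by positivity : (0:ℝ) ≤ 0^2 + 0^2 + L^2)]
    linear_combination (-(1 + (l0z^2 - l2z^2)/(l0z^2 + l2z^2))) * hL2 - hc/2
  · rw [hl₁, hs₁, hu, cross3_v3, inner_v3, norm_v3,
      Real.sq_sqrt (by positivity : (0:ℝ) ≤ 0^2 + 0^2 + L^2)]
    linear_combination ((l0z^2 - l2z^2)/(l0z^2 + l2z^2) - 1) * hL2 + hc/2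
  · rw [hl₁, hs₁, hu, he₁, cross3_v3, cross3_v3, cross3_v3]
    have n1 : v3 0 ((l0z ^ 2 - l2z ^ 2) / (l0z ^ 2 + l2z ^ 2) * L) 0
          + v3 (0*0 - L*0) (L*1 - 0*0) (0*0 - 0*1) - v3 0 l0z 0
        = v3 0 ((l0z ^ 2 - l2z ^ 2) / (l0z ^ 2 + l2z ^ 2) * L + L - l0z) 0 := by
      rw [add_v3, sub_v3]; exact v3_congr (by ring) (by ring) (by ring)
    have n2 : v3 (0*0 - l2z*0) (l2z*(-1) - 0*0) (0*0 - 0*(-1))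
          - v3 0 ((l0z ^ 2 - l2z ^ 2) / (l0z ^ 2 + l2z ^ 2) * L) 0
          - v3 (0*0 - L*0) (L*(-1) - 0*0) (0*0 - 0*(-1))
        = v3 0 (L - (l0z ^ 2 - l2z ^ 2) / (l0z ^ 2 + l2z ^ 2) * L - l2z) 0 := by
      rw [sub_v3, sub_v3]; exact v3_congr (by ring) (by ring) (by ring)
    rw [n1, n2, norm_v3_y, norm_v3_y, key1, key2]
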